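/- Let λ be a partition, and suppose Q : λ̄ × U(λ) → ℚ(q,t) satisfies the exterior (q,t)-hook-walk recursion: for each ν ∈ U(λ), Q(ν|c) = 1 if c is the outer corner ν/λ; Q(ν|c) = 0 if c is an outer corner of λ with λ∪{c} ≠ ν; and Q(ν|c) = ∑_{c' ∈ arm_λ(c) ∪ leg_λ(c)} P(c→c')·Q(ν|c') if c is not an outer corner of λ. Then for every cell c = (x,y) ∈ λ̄ with x > λ_1 and y > λ'_1, and every ν ∈ U(λ), Q(ν|c) = t^{n(ν/λ)} · α_{ν/λ}(q,t). -/

import Mathlib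

open Finset

noncomputable section

/-- The field `ℚ(q,t)` of rational functions in two variables over `ℚ`. -/
abbrev K : Type := FractionRing (MvPolynomial (Fin 2) ℚ)

def q : K := algebraMap (MvPolynomial (Fin 2) ℚ) K (MvPolynomial.X 0)
def t : K := algebraMap (MvPolynomial (Fin 2) ℚ) K (MvPolynomial.X 1)

/-- Arm-length of the cell `c = (row, col)` of `κ` (cells are 0-indexed, Mathlib convention). -/
def arm (κ : YoungDiagram) (c : ℕ × ℕ) : ℕ := κ.rowLen c.1 - c.2 - 1

/-- Leg-length of the cell `c = (row, col)` of `κ`. -/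
def leg (κ : YoungDiagram) (c : ℕ × ℕ) : ℕ := κ.colLen c.2 - c.1 - 1

/-- Hook-length of the cell `c` of `κ`. -/
def hook (κ : YoungDiagram) (c : ℕ × ℕ) : ℕ := arm κ c + leg κ c + 1

/-- `Covers μ λ` means `μ ⋖ λ` in Young's lattice. -/
def Covers (μ l : YoungDiagram) : Prop :=
  μ.cells ⊆ l.cells ∧ l.cells.card = μ.cells.card + 1

open scoped Classical in
/-- For `μ ⋖ λ`, the set `R_{λ/μ}` of cells of `μ` in the same row as the unique cell of `λ/μ`. -/
def Rset (μ l : YoungDiagram) : Finset (ℕ × ℕ) :=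
  μ.cells.filter fun c => ∃ d ∈ l.cells \ μ.cells, c.1 = d.1

open scoped Classical in
/-- For `μ ⋖ λ`, the set `C_{λ/μ}` of cells of `μ` in the same column as the unique cell of `λ/μ`. -/
def Cset (μ l : YoungDiagram) : Finset (ℕ × ℕ) :=
  μ.cells.filter fun c => ∃ d ∈ l.cells \ μ.cells, c.2 = d.2

/-- `[i,j] = 1 - q^i t^j`. -/
def brk (i j : ℕ) : K := 1 - q ^ i * t ^ j

/-- `b_κ(c) = (1 - q^{a} t^{ℓ+1})/(1 - q^{a+1} t^{ℓ})`. -/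
def bcell (κ : YoungDiagram) (c : ℕ × ℕ) : K :=
  brk (arm κ c) (leg κ c + 1) / brk (arm κ c + 1) (leg κ c)

/-- `ψ_{λ/μ}(q,t)` for `μ ⋖ λ`. -/
def ψqt (μ l : YoungDiagram) : K := ∏ c ∈ Rset μ l, bcell μ c / bcell l c

/-- `φ_{λ/μ}(q,t)` for `μ ⋖ λ`. -/
def φqt (μ l : YoungDiagram) : K :=
  ((1 - t) / (1 - q)) * ∏ c ∈ Cset μ l, bcell l c / bcell μ c

/-- `α_{ν/λ}(q,t)` for `λ ⋖ ν`. -/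
def alph (l ν : YoungDiagram) : K :=
  (∏ c ∈ Rset l ν, brk (arm l c) (leg l c + 1) / brk (arm ν c) (leg ν c + 1)) *
  (∏ c ∈ Cset l ν, brk (arm l c + 1) (leg l c) / brk (arm ν c + 1) (leg ν c))

/-- `ᾱ_{ν/λ}(q,t)` for `λ ⋖ ν`. -/
def alphBar (l ν : YoungDiagram) : K :=
  (∏ c ∈ Rset l ν, brk (arm l c + 1) (leg l c) / brk (arm ν c + 1) (leg ν c)) *
  (∏ c ∈ Cset l ν, brk (arm l c) (leg l c + 1) / brk (arm ν c) (leg ν c + 1))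

/-- `n(κ) = ∑_{c ∈ κ} ℓ_κ(c)` (as an integer). -/
def nstat (κ : YoungDiagram) : ℤ := ∑ c ∈ κ.cells, (leg κ c : ℤ)

/-- `n'(κ) = ∑_{c ∈ κ} a_κ(c)` (as an integer). -/
def nstat' (κ : YoungDiagram) : ℤ := ∑ c ∈ κ.cells, (arm κ c : ℤ)


/-- The (exterior) arm of a cell `c = (row, col) ∉ λ`: the cells of the same row strictly
between the end of row `c.1` of `λ` and `c`. -/
def extArm (l : YoungDiagram) (c : ℕ × ℕ) : Finset (ℕ × ℕ) :=
  (Finset.Ico (l.rowLen c.1) c.2).image fun j => (c.1, j)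

/-- The (exterior) leg of a cell `c = (row, col) ∉ λ`: the cells of the same column strictly
between the top of column `c.2` of `λ` and `c`. -/
def extLeg (l : YoungDiagram) (c : ℕ × ℕ) : Finset (ℕ × ℕ) :=
  (Finset.Ico (l.colLen c.2) c.1).image fun i => (i, c.2)

/-- `a(c) = |arm_λ(c)|` for `c ∉ λ`. -/
def extA (l : YoungDiagram) (c : ℕ × ℕ) : ℕ := c.2 - l.rowLen c.1

/-- `ℓ(c) = |leg_λ(c)|` for `c ∉ λ`. -/
def extL (l : YoungDiagram) (c : ℕ × ℕ) : ℕ := c.1 - l.colLen c.2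

/-- The step probability `P(c → c')` of the exterior `(q,t)`-hook walk, for
`c' ∈ arm_λ(c) ∪ leg_λ(c)`: if `c' = (x−i, y)` is in the arm of `c` (same row) the probability
is `q^{a(c)−i} t^{ℓ(c)} (1−q)/(1−q^{a(c)} t^{ℓ(c)})`, and if `c' = (x, y−j)` is in the leg
(same column) it is `t^{j−1} (1−t)/(1−q^{a(c)} t^{ℓ(c)})`. -/
def stepP (l : YoungDiagram) (c c' : ℕ × ℕ) : K :=
  if c'.1 = c.1 then
    q ^ (c'.2 - l.rowLen c.1) * t ^ extL l c * (1 - q) / (1 - q ^ extA l c * t ^ extL l c)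
  else
    t ^ (c.1 - c'.1 - 1) * (1 - t) / (1 - q ^ extA l c * t ^ extL l c)

lemma poly_ne {i j : ℕ} (h : i + j ≠ 0) :
    (1 : MvPolynomial (Fin 2) ℚ) - (MvPolynomial.X 0)^i * (MvPolynomial.X 1)^j ≠ 0 := by
  intro hEq
  have h1 : (MvPolynomial.X (R := ℚ) (0 : Fin 2))^i * (MvPolynomial.X 1)^j
      = MvPolynomial.monomial (Finsupp.single 0 i + Finsupp.single 1 j) (1:ℚ) := by
    rw [MvPolynomial.X_pow_eq_monomial, MvPolynomial.X_pow_eq_monomial,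
      MvPolynomial.monomial_mul, one_mul]
  have hm : (Finsupp.single (0 : Fin 2) i + Finsupp.single 1 j) ≠ 0 := by
    intro h0
    have h0a := DFunLike.congr_fun h0 0
    have h0b := DFunLike.congr_fun h0 1
    simp [Finsupp.single_apply] at h0a h0b
    omega
  have h2 := congrArg (MvPolynomial.coeff (Finsupp.single 0 i + Finsupp.single 1 j)) hEq
  rw [MvPolynomial.coeff_sub, h1, MvPolynomial.coeff_one, MvPolynomial.coeff_monomial] at h2
  simp [Ne.symm hm] at h2

lemma brk_ne {i j : ℕ} (h : i + j ≠ 0) : (1 : K) - q ^ i * t ^ j ≠ 0 := by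
  unfold q t
  rw [← map_pow, ← map_pow, ← map_mul, show (1:K) = algebraMap (MvPolynomial (Fin 2) ℚ) K 1 from (map_one _).symm, ← map_sub]
  intro hh
  exact poly_ne h (IsFractionRing.injective (MvPolynomial (Fin 2) ℚ) K (by rw [hh, map_zero]))

lemma teleq (k e : ℕ) (he : e ≠ 0) (a : ℕ) : ∀ b, a ≤ b →
    ∏ j ∈ Ico a b, (1 - q^(k-1-j)*t^e) / (1 - q^(k-j)*t^e)
      = (1 - q^(k-b)*t^e) / (1 - q^(k-a)*t^e) := by
  intro b
  induction b with
  | zero => intro hb; interval_cases a; exact (div_self (brk_ne (by omega))).symm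
  | succ n ih =>
    intro hb
    rcases Nat.lt_or_ge a (n+1) with h | h
    · have han : a ≤ n := by omega
      rw [Finset.prod_Ico_succ_top han, ih han]
      rw [div_mul_div_comm]
      have h1 : k - 1 - n = k - (n+1) := by omega
      rw [h1, mul_comm (1 - q ^ (k - n) * t ^ e)]
      rw [mul_div_mul_right _ _ (brk_ne (by omega))]
    · have : a = n + 1 := by omega
      subst this; simp only [Ico_self, prod_empty]
      exact (div_self (brk_ne (by omega))).symm
lemma telet (r e : ℕ) (he : e ≠ 0) (a : ℕ) : ∀ b, a ≤ b →
    ∏ i ∈ Ico a b, (1 - q^e*t^(r-1-i)) / (1 - q^e*t^(r-i))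
      = (1 - q^e*t^(r-b)) / (1 - q^e*t^(r-a)) := by
  intro b
  induction b with
  | zero => intro hb; interval_cases a; exact (div_self (brk_ne (by omega))).symm
  | succ n ih =>
    intro hb
    rcases Nat.lt_or_ge a (n+1) with h | h
    · have han : a ≤ n := by omega
      rw [Finset.prod_Ico_succ_top han, ih han]
      rw [div_mul_div_comm]
      have h1 : r - 1 - n = r - (n+1) := by omega
      rw [h1, mul_comm (1 - q ^ e * t ^ (r - n))]
      rw [mul_div_mul_right _ _ (brk_ne (by omega))]
    · have : a = n + 1 := by omega
      subst this; simp only [Ico_self, prod_empty]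
      exact (div_self (brk_ne (by omega))).symm

def RP (l : YoungDiagram) (r k m : ℕ) : K :=
  ∏ j ∈ Ico m k, (1 - q^(k-1-j) * t^(l.colLen j - r)) / (1 - q^(k-j) * t^(l.colLen j - r))
def CP0 (l : YoungDiagram) (r k m : ℕ) : K :=
  ∏ i ∈ Ico m r, (1 - q^(l.rowLen i - k) * t^(r-1-i)) / (1 - q^(l.rowLen i - k) * t^(r-i))
def CPa (l : YoungDiagram) (r k m : ℕ) : K := t^(r-m) * CP0 l r k m

-- mem lemmas in terms of cells
lemma memc {l : YoungDiagram} {i j : ℕ} : (i, j) ∈ l.cells ↔ j < l.rowLen i :=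
  (YoungDiagram.mem_cells _).trans YoungDiagram.mem_iff_lt_rowLen
lemma memc' {l : YoungDiagram} {i j : ℕ} : (i, j) ∈ l.cells ↔ i < l.colLen j :=
  (YoungDiagram.mem_cells _).trans YoungDiagram.mem_iff_lt_colLen

section Steps
variable {l : YoungDiagram} {r k : ℕ} (hrk : l.rowLen r = k) (hkr : l.colLen k = r)

include hrk in
lemma RP_step {x : ℕ} (hx : r ≤ x) :
    RP l r k (l.rowLen (x+1)) * (1 - q^(k - l.rowLen (x+1)) * t^(x+1-r)) =
    RP l r k (l.rowLen x) * (1 - q^(k - l.rowLen x) * t^(x+1-r)) := by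
  set m' := l.rowLen (x+1) with hm'
  set m := l.rowLen x with hm
  have hmm : m' ≤ m := l.rowLen_anti x (x+1) (by omega)
  have hmk : m ≤ k := hrk ▸ l.rowLen_anti r x hx
  have hsplit : RP l r k m' = (∏ j ∈ Ico m' m, (1 - q^(k-1-j) * t^(l.colLen j - r)) /
      (1 - q^(k-j) * t^(l.colLen j - r))) * RP l r k m := by
    rw [RP, RP, ← Finset.prod_Ico_consecutive _ hmm hmk]
  have hcl : ∀ j ∈ Ico m' m, (1 - q^(k-1-j) * t^(l.colLen j - r)) /
      (1 - q^(k-j) * t^(l.colLen j - r)) = (1 - q^(k-1-j) * t^(x+1-r)) / (1 - q^(k-j) * t^(x+1-r)) := by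
    intro j hj
    rw [Finset.mem_Ico] at hj
    have h1 : x < l.colLen j := memc'.mp (memc.mpr (by omega))
    have h2 : ¬ (x + 1 < l.colLen j) := fun hc => by
      have := memc.mp (memc'.mpr hc); omega
    have : l.colLen j - r = x + 1 - r := by omega
    rw [this]
  rw [hsplit, Finset.prod_congr rfl hcl, teleq k (x+1-r) (by omega) m' m hmm]
  have hB : (1 : K) - q^(k-m')*t^(x+1-r) ≠ 0 := brk_ne (by omega)
  rw [div_mul_eq_mul_div, div_mul_cancel₀ _ hB]
  ring

include hrk hkr in
lemma claimA : ∀ x, r ≤ x →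
    ∑ i ∈ Ico r x, t^(x-1-i) * (1-t) * RP l r k (l.rowLen i) =
    RP l r k (l.rowLen x) * (1 - q^(k - l.rowLen x) * t^(x-r)) := by
  intro x
  induction x with
  | zero => intro hx; interval_cases r; simp [hrk]
  | succ n ih =>
    intro hx
    rcases Nat.lt_or_ge r (n+1) with h | h
    · have hrn : r ≤ n := by omega
      rw [Finset.sum_Ico_succ_top hrn]
      have hterm : ∀ i ∈ Ico r n, t^(n+1-1-i) * (1-t) * RP l r k (l.rowLen i)
          = t * (t^(n-1-i) * (1-t) * RP l r k (l.rowLen i)) := by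
        intro i hi; rw [Finset.mem_Ico] at hi
        have : n + 1 - 1 - i = (n - 1 - i) + 1 := by omega
        rw [this, pow_succ]; ring
      rw [Finset.sum_congr rfl hterm, ← Finset.mul_sum, ih hrn, RP_step hrk hrn]
      have h1 : n + 1 - 1 - n = 0 := by omega
      have h2 : n + 1 - r = (n - r) + 1 := by omega
      rw [h1, h2, pow_succ, pow_zero]; ring
    · have : r = n + 1 := by omega
      subst this; simp [hrk]
end Steps

section Steps2
variable {l : YoungDiagram} {r k : ℕ} (hrk : l.rowLen r = k) (hkr : l.colLen k = r)

include hkr in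
lemma CP_step {y : ℕ} (hy : k ≤ y) :
    CP0 l r k (l.colLen (y+1)) - q^(y+1-k) * CPa l r k (l.colLen (y+1)) =
    CP0 l r k (l.colLen y) - q^(y+1-k) * CPa l r k (l.colLen y) := by
  set m' := l.colLen (y+1) with hm'
  set m := l.colLen y with hm
  have hmm : m' ≤ m := l.colLen_anti y (y+1) (by omega)
  have hmr : m ≤ r := hkr ▸ l.colLen_anti k y hy
  have hsplit : CP0 l r k m' = (∏ i ∈ Ico m' m, (1 - q^(l.rowLen i - k) * t^(r-1-i)) /
      (1 - q^(l.rowLen i - k) * t^(r-i))) * CP0 l r k m := by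
    rw [CP0, CP0, ← Finset.prod_Ico_consecutive _ hmm hmr]
  have hcl : ∀ i ∈ Ico m' m, (1 - q^(l.rowLen i - k) * t^(r-1-i)) /
      (1 - q^(l.rowLen i - k) * t^(r-i)) = (1 - q^(y+1-k) * t^(r-1-i)) / (1 - q^(y+1-k) * t^(r-i)) := by
    intro i hi
    rw [Finset.mem_Ico] at hi
    have h1 : y < l.rowLen i := memc.mp (memc'.mpr (by omega))
    have h2 : ¬ (y + 1 < l.rowLen i) := fun hc => by
      have := memc'.mp (memc.mpr hc); omega
    have : l.rowLen i - k = y + 1 - k := by omega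
    rw [this]
  have hprod : CP0 l r k m' = (1 - q^(y+1-k) * t^(r-m)) / (1 - q^(y+1-k) * t^(r-m')) * CP0 l r k m := by
    rw [hsplit, Finset.prod_congr rfl hcl, telet r (y+1-k) (by omega) m' m hmm]
  have hB : (1 : K) - q^(y+1-k)*t^(r-m') ≠ 0 := brk_ne (by omega)
  rw [CPa, CPa, hprod]
  have step1 : (1 - q^(y+1-k) * t^(r-m)) / (1 - q^(y+1-k) * t^(r-m')) * CP0 l r k m -
      q^(y+1-k) * (t^(r-m') * ((1 - q^(y+1-k) * t^(r-m)) / (1 - q^(y+1-k) * t^(r-m')) * CP0 l r k m)) =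
      ((1 - q^(y+1-k) * t^(r-m)) * CP0 l r k m) / (1 - q^(y+1-k) * t^(r-m')) * (1 - q^(y+1-k) * t^(r-m')) := by
    ring
  rw [step1, div_mul_cancel₀ _ hB]
  ring

include hrk hkr in
lemma claimB : ∀ y, k ≤ y →
    ∑ j ∈ Ico k y, q^(j-k) * (1-q) * CPa l r k (l.colLen j) =
    CP0 l r k (l.colLen y) - q^(y-k) * CPa l r k (l.colLen y) := by
  intro y
  induction y with
  | zero => intro hy; interval_cases k; simp [hkr, CPa]
  | succ n ih =>
    intro hy
    rcases Nat.lt_or_ge k (n+1) with h | h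
    · have hkn : k ≤ n := by omega
      rw [Finset.sum_Ico_succ_top hkn, ih hkn, CP_step hkr hkn]
      have h2 : n + 1 - k = (n - k) + 1 := by omega
      rw [h2, pow_succ]; ring
    · have : k = n + 1 := by omega
      subst this; simp [hkr, CPa]
end Steps2

def FF (l : YoungDiagram) (r k : ℕ) (c : ℕ × ℕ) : K :=
  if c.1 < r ∨ c.2 < k then 0 else RP l r k (l.rowLen c.1) * CPa l r k (l.colLen c.2)

lemma key_lemma (l ν : YoungDiagram) (r k : ℕ)
    (hrk : l.rowLen r = k) (hkr : l.colLen k = r)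
    (hdl : (r, k) ∉ l.cells) (hins : ν.cells = insert (r, k) l.cells)
    (Q : (ℕ × ℕ) → YoungDiagram → K)
    (hone : ∀ c : ℕ × ℕ, c ∉ l.cells → ν.cells = insert c l.cells → Q c ν = 1)
    (hzero : ∀ c : ℕ × ℕ, c ∉ l.cells →
      extA l c = 0 → extL l c = 0 → ν.cells ≠ insert c l.cells → Q c ν = 0)
    (hrec : ∀ c : ℕ × ℕ, c ∉ l.cells → ¬(extA l c = 0 ∧ extL l c = 0) →
      Q c ν = ∑ c' ∈ extArm l c ∪ extLeg l c, stepP l c c' * Q c' ν) :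
    ∀ n : ℕ, ∀ c : ℕ × ℕ, c.1 + c.2 < n → c ∉ l.cells → Q c ν = FF l r k c := by
  intro n
  induction n with
  | zero => intro c hc; omega
  | succ n IH =>
    rintro ⟨x, y⟩ hn hcl
    have hn' : x + y < n + 1 := hn
    have hxy : l.rowLen x ≤ y := le_of_not_gt (fun hlt => hcl (memc.mpr hlt))
    have hyx : l.colLen y ≤ x := le_of_not_gt (fun hlt => hcl (memc'.mpr hlt))
    have hAv : extA l (x, y) = y - l.rowLen x := rfl
    have hLv : extL l (x, y) = x - l.colLen y := rfl
    by_cases hcor : extA l (x, y) = 0 ∧ extL l (x, y) = 0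
    · -- corner case
      have hy : y = l.rowLen x := by have := hcor.1; omega
      have hx : x = l.colLen y := by have := hcor.2; omega
      by_cases hcd : (x, y) = ((r, k) : ℕ × ℕ)
      · injection hcd with h1 h2
        subst h1; subst h2
        rw [hone (x, y) hcl hins]
        unfold FF
        rw [if_neg (by omega)]
        unfold RP CPa CP0
        rw [hrk, hkr]
        simp
      · rw [hzero (x, y) hcl hcor.1 hcor.2 (by
          intro he
          have h1 : ((x, y) : ℕ × ℕ) ∈ ν.cells := he ▸ Finset.mem_insert_self _ _
          rw [hins] at h1
          rcases Finset.mem_insert.mp h1 with h2 | h2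
          · exact hcd h2
          · exact hcl h2)]
        unfold FF
        rw [if_pos ?_]
        by_contra hno
        push_neg at hno
        obtain ⟨h1, h2⟩ := hno
        have h3 : l.rowLen x ≤ k := hrk ▸ l.rowLen_anti r x h1
        have hyk : y = k := by omega
        have hxr : x = r := by rw [hx, hyk, hkr]
        exact hcd (by rw [hxr, hyk])
    · -- non-corner case
      rw [hrec (x, y) hcl hcor]
      have hinj1 : ∀ a ∈ Ico (l.rowLen x) y, ∀ b ∈ Ico (l.rowLen x) y,
          ((x, a) : ℕ × ℕ) = (x, b) → a = b := by
        intro a _ b _ h; injection h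
      have hinj2 : ∀ a ∈ Ico (l.colLen y) x, ∀ b ∈ Ico (l.colLen y) x,
          ((a, y) : ℕ × ℕ) = (b, y) → a = b := by
        intro a _ b _ h; injection h
      have hdisj : Disjoint (extArm l (x, y)) (extLeg l (x, y)) := by
        rw [Finset.disjoint_left]
        rintro ⟨a, b⟩ ha hb
        unfold extArm at ha
        unfold extLeg at hb
        obtain ⟨j, hj, hj2⟩ := Finset.mem_image.mp ha
        obtain ⟨i, hi, hi2⟩ := Finset.mem_image.mp hb
        rw [Finset.mem_Ico] at hj hi
        injection hj2 with e1 e2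
        injection hi2 with e3 e4
        omega
      rw [Finset.sum_union hdisj]
      unfold extArm extLeg
      rw [Finset.sum_image hinj1, Finset.sum_image hinj2]
      -- evaluate step probabilities and use induction hypothesis
      have harm : ∀ j ∈ Ico (l.rowLen x) y, stepP l (x, y) (x, j) * Q (x, j) ν
          = q ^ (j - l.rowLen x) * t ^ (x - l.colLen y) * (1 - q) /
              (1 - q ^ (y - l.rowLen x) * t ^ (x - l.colLen y)) * FF l r k (x, j) := by
        intro j hj
        rw [Finset.mem_Ico] at hj
        have h5 : ((x, j) : ℕ × ℕ) ∉ l.cells := fun hmem => by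
          have := memc.mp hmem; omega
        rw [IH (x, j) (by simp; omega) h5]
        unfold stepP
        rw [if_pos rfl, hAv, hLv]
      have hleg : ∀ i ∈ Ico (l.colLen y) x, stepP l (x, y) (i, y) * Q (i, y) ν
          = t ^ (x - i - 1) * (1 - t) /
              (1 - q ^ (y - l.rowLen x) * t ^ (x - l.colLen y)) * FF l r k (i, y) := by
        intro i hi
        rw [Finset.mem_Ico] at hi
        have h5 : ((i, y) : ℕ × ℕ) ∉ l.cells := fun hmem => by
          have := memc'.mp hmem; omega
        rw [IH (i, y) (by simp; omega) h5]
        unfold stepP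
        rw [if_neg (by simp; omega), hAv, hLv]
      rw [Finset.sum_congr rfl harm, Finset.sum_congr rfl hleg]
      by_cases hreg : r ≤ x ∧ k ≤ y
      · obtain ⟨hrx, hky⟩ := hreg
        have hρk : l.rowLen x ≤ k := hrk ▸ l.rowLen_anti r x hrx
        have hmr : l.colLen y ≤ r := hkr ▸ l.colLen_anti k y hky
        have hD : (1 : K) - q ^ (y - l.rowLen x) * t ^ (x - l.colLen y) ≠ 0 := by
          apply brk_ne
          omega
        -- arm sum
        rw [← Finset.sum_Ico_consecutive _ hρk hky]
        have hzero1 : ∀ j ∈ Ico (l.rowLen x) k, q ^ (j - l.rowLen x) * t ^ (x - l.colLen y) * (1 - q) /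
            (1 - q ^ (y - l.rowLen x) * t ^ (x - l.colLen y)) * FF l r k (x, j) = 0 := by
          intro j hj
          rw [Finset.mem_Ico] at hj
          unfold FF
          rw [if_pos (Or.inr hj.2), mul_zero]
        rw [Finset.sum_eq_zero hzero1, zero_add]
        have harm2 : ∀ j ∈ Ico k y, q ^ (j - l.rowLen x) * t ^ (x - l.colLen y) * (1 - q) /
            (1 - q ^ (y - l.rowLen x) * t ^ (x - l.colLen y)) * FF l r k (x, j)
            = (q ^ (k - l.rowLen x) * t ^ (x - l.colLen y) * RP l r k (l.rowLen x) /
                (1 - q ^ (y - l.rowLen x) * t ^ (x - l.colLen y))) *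
              (q ^ (j - k) * (1 - q) * CPa l r k (l.colLen j)) := by
          intro j hj
          rw [Finset.mem_Ico] at hj
          unfold FF
          rw [if_neg (by omega)]
          have hq : (q : K) ^ (j - l.rowLen x) = q ^ (k - l.rowLen x) * q ^ (j - k) := by
            rw [← pow_add]; congr 1; omega
          rw [hq]
          ring
        rw [Finset.sum_congr rfl harm2, ← Finset.mul_sum, claimB hrk hkr y hky]
        -- leg sum
        rw [← Finset.sum_Ico_consecutive _ (hmr : l.colLen y ≤ r) (hrx : r ≤ x)]
        have hzero2 : ∀ i ∈ Ico (l.colLen y) r, t ^ (x - i - 1) * (1 - t) /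
            (1 - q ^ (y - l.rowLen x) * t ^ (x - l.colLen y)) * FF l r k (i, y) = 0 := by
          intro i hi
          rw [Finset.mem_Ico] at hi
          unfold FF
          rw [if_pos (Or.inl hi.2), mul_zero]
        rw [Finset.sum_eq_zero hzero2, zero_add]
        have hleg2 : ∀ i ∈ Ico r x, t ^ (x - i - 1) * (1 - t) /
            (1 - q ^ (y - l.rowLen x) * t ^ (x - l.colLen y)) * FF l r k (i, y)
            = (CPa l r k (l.colLen y) /
                (1 - q ^ (y - l.rowLen x) * t ^ (x - l.colLen y))) *
              (t ^ (x - 1 - i) * (1 - t) * RP l r k (l.rowLen i)) := by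
          intro i hi
          rw [Finset.mem_Ico] at hi
          unfold FF
          rw [if_neg (by omega)]
          have ht : x - i - 1 = x - 1 - i := by omega
          rw [ht]
          ring
        rw [Finset.sum_congr rfl hleg2, ← Finset.mul_sum, claimA hrk hkr x hrx]
        -- the final rational identity
        unfold FF
        rw [if_neg (by omega)]
        have e1 : (t : K) ^ (x - l.colLen y) = t ^ (x - r) * t ^ (r - l.colLen y) := by
          rw [← pow_add]; congr 1; omega
        have e2 : (q : K) ^ (y - l.rowLen x) = q ^ (k - l.rowLen x) * q ^ (y - k) := by
          rw [← pow_add]; congr 1; omega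
        simp only [CPa]
        rw [e1, e2] at hD ⊢
        rw [div_mul_eq_mul_div, div_mul_eq_mul_div, ← add_div, div_eq_iff hD]
        ring
      · have hor : x < r ∨ y < k := by omega
        have hFF : FF l r k (x, y) = 0 := by unfold FF; rw [if_pos hor]
        have hz1 : ∀ j ∈ Ico (l.rowLen x) y, q ^ (j - l.rowLen x) * t ^ (x - l.colLen y) * (1 - q) /
            (1 - q ^ (y - l.rowLen x) * t ^ (x - l.colLen y)) * FF l r k (x, j) = 0 := by
          intro j hj
          rw [Finset.mem_Ico] at hj
          unfold FF
          rw [if_pos (by omega), mul_zero]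
        have hz2 : ∀ i ∈ Ico (l.colLen y) x, t ^ (x - i - 1) * (1 - t) /
            (1 - q ^ (y - l.rowLen x) * t ^ (x - l.colLen y)) * FF l r k (i, y) = 0 := by
          intro i hi
          rw [Finset.mem_Ico] at hi
          unfold FF
          rw [if_pos (by omega), mul_zero]
        rw [Finset.sum_eq_zero hz1, Finset.sum_eq_zero hz2, add_zero, hFF]

/-- Theorem 6.5 (`(q,t)`-hook walk): suppose `Q : λ̄ × U(λ) → ℚ(q,t)` satisfies the exterior
`(q,t)`-hook-walk recursion: `Q(ν|c) = 1` if `c` is the outer corner `ν/λ`; `Q(ν|c) = 0` if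
`c` is an outer corner of `λ` (i.e. `a(c) = ℓ(c) = 0`) with `λ ∪ {c} ≠ ν`; and
`Q(ν|c) = ∑_{c' ∈ arm_λ(c) ∪ leg_λ(c)} P(c→c') Q(ν|c')` if `c` is not an outer corner.
Then for every cell `c = (row, col) ∉ λ` with `col ≥ λ₁` and `row ≥ λ'₁` (i.e. the Cartesian
coordinates satisfy `x > λ₁`, `y > λ'₁`) and every `ν ∈ U(λ)`,
`Q(ν|c) = t^{n(ν/λ)} α_{ν/λ}(q,t)`. -/
theorem qt_hook_walk (l : YoungDiagram) (Q : (ℕ × ℕ) → YoungDiagram → K)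
    (hone : ∀ ν : YoungDiagram, Covers l ν → ∀ c : ℕ × ℕ, c ∉ l.cells →
      ν.cells = insert c l.cells → Q c ν = 1)
    (hzero : ∀ ν : YoungDiagram, Covers l ν → ∀ c : ℕ × ℕ, c ∉ l.cells →
      extA l c = 0 → extL l c = 0 → ν.cells ≠ insert c l.cells → Q c ν = 0)
    (hrec : ∀ ν : YoungDiagram, Covers l ν → ∀ c : ℕ × ℕ, c ∉ l.cells →
      ¬(extA l c = 0 ∧ extL l c = 0) →
      Q c ν = ∑ c' ∈ extArm l c ∪ extLeg l c, stepP l c c' * Q c' ν) :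
    ∀ ν : YoungDiagram, Covers l ν → ∀ c : ℕ × ℕ, c ∉ l.cells →
      l.rowLen 0 ≤ c.2 → l.colLen 0 ≤ c.1 →
      Q c ν = t ^ (nstat ν - nstat l) * alph l ν := by
  intro ν hcov c hc hc2 hc1
  obtain ⟨hsub, hcard⟩ := hcov
  have hsd : (ν.cells \ l.cells).card = 1 := by rw [Finset.card_sdiff_of_subset hsub]; omega
  obtain ⟨d, hdeq⟩ := Finset.card_eq_one.mp hsd
  obtain ⟨r, k⟩ := d
  have hdm : ((r, k) : ℕ × ℕ) ∈ ν.cells \ l.cells := hdeq ▸ Finset.mem_singleton_self _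
  have hdν : ((r, k) : ℕ × ℕ) ∈ ν.cells := (Finset.mem_sdiff.mp hdm).1
  have hdl : ((r, k) : ℕ × ℕ) ∉ l.cells := (Finset.mem_sdiff.mp hdm).2
  have hins : ν.cells = insert (r, k) l.cells := by
    rw [Finset.insert_eq, ← hdeq, Finset.sdiff_union_self_eq_union]
    exact (Finset.union_eq_left.mpr hsub).symm
  have hνmem : ∀ p : ℕ × ℕ, p ∈ ν.cells ↔ p = (r, k) ∨ p ∈ l.cells := by
    intro p; rw [hins, Finset.mem_insert]
  have hrk : l.rowLen r = k := by
    apply le_antisymm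
    · by_contra hcon; push_neg at hcon
      exact hdl (memc.mpr hcon)
    · by_contra hcon; push_neg at hcon
      have h1 : k < ν.rowLen r := memc.mp hdν
      have h2 : ((r, l.rowLen r) : ℕ × ℕ) ∈ ν.cells := memc.mpr (by omega)
      rcases (hνmem _).mp h2 with h3 | h3
      · injection h3 with e1 e2; omega
      · have := memc.mp h3; omega
  have hkr : l.colLen k = r := by
    apply le_antisymm
    · by_contra hcon; push_neg at hcon
      exact hdl (memc'.mpr hcon)
    · by_contra hcon; push_neg at hcon
      have h1 : r < ν.colLen k := memc'.mp hdν
      have h2 : ((l.colLen k, k) : ℕ × ℕ) ∈ ν.cells := memc'.mpr (by omega)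
      rcases (hνmem _).mp h2 with h3 | h3
      · injection h3 with e1 e2; omega
      · have := memc'.mp h3; omega
  have hνr : ν.rowLen r = k + 1 := by
    apply le_antisymm
    · by_contra hcon; push_neg at hcon
      have h2 : ((r, k + 1) : ℕ × ℕ) ∈ ν.cells := memc.mpr hcon
      rcases (hνmem _).mp h2 with h3 | h3
      · injection h3 with e1 e2; omega
      · have := memc.mp h3; omega
    · have h1 : k < ν.rowLen r := memc.mp hdν
      omega
  have hνc : ν.colLen k = r + 1 := by
    apply le_antisymm
    · by_contra hcon; push_neg at hcon
      have h2 : ((r + 1, k) : ℕ × ℕ) ∈ ν.cells := memc'.mpr hcon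
      rcases (hνmem _).mp h2 with h3 | h3
      · injection h3 with e1 e2; omega
      · have := memc'.mp h3; omega
    · have h1 : r < ν.colLen k := memc'.mp hdν
      omega
  have hνri : ∀ i, i ≠ r → ν.rowLen i = l.rowLen i := by
    intro i hi
    apply le_antisymm
    · by_contra hcon; push_neg at hcon
      have h2 : ((i, l.rowLen i) : ℕ × ℕ) ∈ ν.cells := memc.mpr hcon
      rcases (hνmem _).mp h2 with h3 | h3
      · injection h3 with e1 e2; exact hi e1
      · have := memc.mp h3; omega
    · by_contra hcon; push_neg at hcon
      have h2 : ((i, ν.rowLen i) : ℕ × ℕ) ∈ l.cells := memc.mpr hcon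
      have := memc.mp (hsub h2); omega
  have hνcj : ∀ j, j ≠ k → ν.colLen j = l.colLen j := by
    intro j hj
    apply le_antisymm
    · by_contra hcon; push_neg at hcon
      have h2 : ((l.colLen j, j) : ℕ × ℕ) ∈ ν.cells := memc'.mpr hcon
      rcases (hνmem _).mp h2 with h3 | h3
      · injection h3 with e1 e2; exact hj e2
      · have := memc'.mp h3; omega
    · by_contra hcon; push_neg at hcon
      have h2 : ((ν.colLen j, j) : ℕ × ℕ) ∈ l.cells := memc'.mpr hcon
      have := memc'.mp (hsub h2); omega
  -- the n-statistic
  have hnstat : nstat ν - nstat l = (r : ℤ) := by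
    unfold nstat
    rw [hins, Finset.sum_insert hdl]
    have hlegd : (leg ν (r, k) : ℤ) = 0 := by
      have : leg ν (r, k) = 0 := by
        show ν.colLen k - r - 1 = 0
        omega
      rw [this]; rfl
    have hsum : ∀ c ∈ l.cells, (leg ν c : ℤ) = (leg l c : ℤ) + (if c.2 = k then 1 else 0) := by
      rintro ⟨i, j⟩ hcell
      by_cases hjk : j = k
      · subst hjk
        rw [if_pos rfl]
        have hi : i < r := by have := memc'.mp hcell; omega
        show ((ν.colLen j - i - 1 : ℕ) : ℤ) = ((l.colLen j - i - 1 : ℕ) : ℤ) + 1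
        rw [hνc, hkr]
        omega
      · rw [if_neg hjk, add_zero]
        show ((ν.colLen j - i - 1 : ℕ) : ℤ) = ((l.colLen j - i - 1 : ℕ) : ℤ)
        rw [hνcj j hjk]
    rw [Finset.sum_congr rfl hsum, Finset.sum_add_distrib, Finset.sum_boole]
    have hfil : l.cells.filter (fun c => c.2 = k) = l.col k := rfl
    rw [hfil, ← YoungDiagram.colLen_eq_card, hkr, hlegd]
    ring
  -- the alpha product
  have hRset : Rset l ν = (Finset.range k).image (fun j => ((r, j) : ℕ × ℕ)) := by
    ext ⟨a, b⟩
    rw [Rset, Finset.mem_filter, Finset.mem_image]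
    constructor
    · rintro ⟨hmem, d', hd', he⟩
      rw [hdeq, Finset.mem_singleton] at hd'
      subst hd'
      have ha : a = r := he
      subst ha
      have hb : b < k := by have := memc.mp hmem; omega
      exact ⟨b, Finset.mem_range.mpr hb, rfl⟩
    · rintro ⟨j, hj, he⟩
      injection he with e1 e2
      subst e1; subst e2
      rw [Finset.mem_range] at hj
      refine ⟨memc.mpr (by omega), (r, k), ?_, rfl⟩
      rw [hdeq]; exact Finset.mem_singleton_self _
  have hCset : Cset l ν = (Finset.range r).image (fun i => ((i, k) : ℕ × ℕ)) := by
    ext ⟨a, b⟩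
    rw [Cset, Finset.mem_filter, Finset.mem_image]
    constructor
    · rintro ⟨hmem, d', hd', he⟩
      rw [hdeq, Finset.mem_singleton] at hd'
      subst hd'
      have hb : b = k := he
      subst hb
      have ha : a < r := by have := memc'.mp hmem; omega
      exact ⟨a, Finset.mem_range.mpr ha, rfl⟩
    · rintro ⟨i, hi, he⟩
      injection he with e1 e2
      subst e1; subst e2
      rw [Finset.mem_range] at hi
      refine ⟨memc'.mpr (by omega), (r, k), ?_, rfl⟩
      rw [hdeq]; exact Finset.mem_singleton_self _
  have hRprod : (∏ c ∈ Rset l ν, brk (arm l c) (leg l c + 1) / brk (arm ν c) (leg ν c + 1))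
      = RP l r k 0 := by
    rw [hRset, Finset.prod_image (by intro a _ b _ h; injection h)]
    rw [RP, ← Finset.range_eq_Ico]
    apply Finset.prod_congr rfl
    intro j hj
    rw [Finset.mem_range] at hj
    have hmem : ((r, j) : ℕ × ℕ) ∈ l.cells := memc.mpr (by omega)
    have hcj : r < l.colLen j := memc'.mp hmem
    show brk (l.rowLen r - j - 1) (l.colLen j - r - 1 + 1) /
        brk (ν.rowLen r - j - 1) (ν.colLen j - r - 1 + 1)
      = (1 - q ^ (k - 1 - j) * t ^ (l.colLen j - r)) / (1 - q ^ (k - j) * t ^ (l.colLen j - r))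
    rw [hrk, hνr, hνcj j (by omega)]
    rw [brk, brk]
    have e1 : k - j - 1 = k - 1 - j := by omega
    have e2 : l.colLen j - r - 1 + 1 = l.colLen j - r := by omega
    have e3 : k + 1 - j - 1 = k - j := by omega
    rw [e1, e2, e3]
  have hCprod : (∏ c ∈ Cset l ν, brk (arm l c + 1) (leg l c) / brk (arm ν c + 1) (leg ν c))
      = CP0 l r k 0 := by
    rw [hCset, Finset.prod_image (by intro a _ b _ h; injection h)]
    rw [CP0, ← Finset.range_eq_Ico]
    apply Finset.prod_congr rfl
    intro i hi
    rw [Finset.mem_range] at hi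
    have hmem : ((i, k) : ℕ × ℕ) ∈ l.cells := memc'.mpr (by omega)
    have hri : k < l.rowLen i := memc.mp hmem
    show brk (l.rowLen i - k - 1 + 1) (l.colLen k - i - 1) /
        brk (ν.rowLen i - k - 1 + 1) (ν.colLen k - i - 1)
      = (1 - q ^ (l.rowLen i - k) * t ^ (r - 1 - i)) / (1 - q ^ (l.rowLen i - k) * t ^ (r - i))
    rw [hkr, hνc, hνri i (by omega)]
    rw [brk, brk]
    have e1 : l.rowLen i - k - 1 + 1 = l.rowLen i - k := by omega
    have e2 : r - i - 1 = r - 1 - i := by omega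
    have e3 : r + 1 - i - 1 = r - i := by omega
    rw [e1, e2, e3]
  have halph : alph l ν = RP l r k 0 * CP0 l r k 0 := by
    rw [alph, hRprod, hCprod]
  -- put everything together
  have hk2 : k ≤ c.2 := le_trans (hrk ▸ l.rowLen_anti 0 r (Nat.zero_le r)) hc2
  have hr1 : r ≤ c.1 := le_trans (hkr ▸ l.colLen_anti 0 k (Nat.zero_le k)) hc1
  have h0x : l.rowLen c.1 = 0 := by
    by_contra hcon
    have h1 : ((c.1, 0) : ℕ × ℕ) ∈ l.cells := memc.mpr (by omega)
    have := memc'.mp h1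
    omega
  have h0y : l.colLen c.2 = 0 := by
    by_contra hcon
    have h1 : ((0, c.2) : ℕ × ℕ) ∈ l.cells := memc'.mpr (by omega)
    have := memc.mp h1
    omega
  rw [key_lemma l ν r k hrk hkr hdl hins Q (hone ν ⟨hsub, hcard⟩) (hzero ν ⟨hsub, hcard⟩)
    (hrec ν ⟨hsub, hcard⟩) (c.1 + c.2 + 1) c (by omega) hc]
  rw [FF, if_neg (by omega), h0x, h0y, hnstat, halph, zpow_natCast]
  rw [CPa, Nat.sub_zero]
  ring

end
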